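/- For all real numbers s, t with 0 < s < t < 1, the inequality ((1−t²)²/(2t²))(1 − P(s)²) + ((1−t²)(1−s)(s+t²)/t²) P'(s) ≤ 8/π² holds, where G(s) = Σ_{n≥0} s^n/(2n+1), P(s) = 1 + (8/π²) s G(s)², and P'(s) = 8G(s)/(π²(1−s)). -/

import Mathlib

open Real

lemma G_summable {s : ℝ} (hs0 : 0 ≤ s) (hs1 : s < 1) :
    Summable (fun n : ℕ => s ^ n / (2 * n + 1)) := by
  apply Summable.of_nonneg_of_le (fun n => by positivity)
    (fun n => ?_) (summable_geometric_of_lt_one hs0 hs1)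
  have h1 : (1 : ℝ) ≤ 2 * n + 1 := by
    have : (0:ℝ) ≤ (n:ℝ) := Nat.cast_nonneg n
    linarith
  have := pow_nonneg hs0 n
  calc s ^ n / (2 * n + 1) ≤ s ^ n / 1 := by
        apply div_le_div_of_nonneg_left this (by norm_num) h1
    _ = s ^ n := by ring

lemma G_lower {s : ℝ} (hs0 : 0 ≤ s) (hs1 : s < 1) :
    1 + s / 3 ≤ ∑' n : ℕ, s ^ n / (2 * n + 1) := by
  have hsum := G_summable hs0 hs1
  have h := Summable.sum_le_tsum (Finset.range 2) (fun n _ => by positivity) hsum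
  have he : ∑ i ∈ Finset.range 2, s ^ i / (2 * (i:ℝ) + 1) = 1 + s / 3 := by
    norm_num [Finset.sum_range_succ]
  linarith

lemma G_upper {s : ℝ} (hs0 : 0 ≤ s) (hs1 : s < 1) :
    (1 - s) * (∑' n : ℕ, s ^ n / (2 * n + 1)) ≤ 1 := by
  have hsum := G_summable hs0 hs1
  -- (1-s)*G = G - s*G ≤ 1  ⟺  G - 1 ≤ s*G
  have h1 : (∑' n : ℕ, s ^ n / (2 * n + 1))
      = 1 + ∑' n : ℕ, s ^ (n + 1) / (2 * (n + 1) + 1) := by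
    rw [Summable.tsum_eq_zero_add hsum]
    push_cast
    norm_num
  have h2 : s * (∑' n : ℕ, s ^ n / (2 * n + 1))
      = ∑' n : ℕ, s ^ (n + 1) / (2 * n + 1) := by
    rw [← tsum_mul_left]
    congr 1; ext n; ring
  have h3 : (∑' n : ℕ, s ^ (n + 1) / (2 * (n + 1) + 1))
      ≤ ∑' n : ℕ, s ^ (n + 1) / (2 * n + 1) := by
    apply Summable.tsum_le_tsum _ _ _
    · intro n
      gcongr
      push_cast; linarith
    · have := (summable_nat_add_iff 1).2 hsum
      simpa using this
    · apply Summable.of_nonneg_of_le (fun n => by positivity) (fun n => ?_)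
        (summable_geometric_of_lt_one hs0 hs1)
      have h1 : (1 : ℝ) ≤ 2 * (n:ℝ) + 1 := by
        have : (0:ℝ) ≤ (n:ℝ) := Nat.cast_nonneg n
        linarith
      have ha : s ^ (n+1) / (2 * (n:ℝ) + 1) ≤ s ^ (n+1) :=
        div_le_self (by positivity) h1
      have hb : s ^ (n+1) ≤ s ^ n := by
        rw [pow_succ]
        nlinarith [pow_nonneg hs0 n]
      linarith
  nlinarith [h3]

theorem F_le_eight_div_pi_sq
    (G : ℝ → ℝ) (hG : ∀ s : ℝ, G s = ∑' n : ℕ, s ^ n / (2 * n + 1))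
    (s t : ℝ) (hs : 0 < s) (hst : s < t) (ht : t < 1) :
    (1 - t ^ 2) ^ 2 / (2 * t ^ 2) * (1 - (1 + 8 / Real.pi ^ 2 * s * G s ^ 2) ^ 2)
      + (1 - t ^ 2) * (1 - s) * (s + t ^ 2) / t ^ 2
          * (8 * G s / (Real.pi ^ 2 * (1 - s)))
      ≤ 8 / Real.pi ^ 2 := by
  have hs1 : s < 1 := hst.trans ht
  have ht0 : 0 < t := hs.trans hst
  set g := G s with hgdef
  have hgs : g = ∑' n : ℕ, s ^ n / (2 * n + 1) := hG s
  have hg1 : 1 + s / 3 ≤ g := hgs ▸ G_lower hs.le hs1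
  have hg2 : (1 - s) * g ≤ 1 := hgs ▸ G_upper hs.le hs1
  have hπ : 0 < Real.pi := Real.pi_pos
  have hπlt : Real.pi < 3.15 := Real.pi_lt_d2
  have hπgt : 3.14 < Real.pi := Real.pi_gt_d2
  have hgpos : (1 : ℝ) ≤ g := by linarith
  -- key : π * (1 - (1-s)g) ≤ 4 s g²
  have hcoef : 0 ≤ Real.pi - Real.pi * s + 4 * s := by nlinarith
  have hmul : (1 + s / 3) * (Real.pi - Real.pi * s + 4 * s)
      ≤ g * (Real.pi - Real.pi * s + 4 * s) :=
    mul_le_mul_of_nonneg_right hg1 hcoef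
  have key1 : Real.pi * (1 - (1 - s) * g) ≤ 4 * s * g := by nlinarith
  have key : Real.pi * (1 - (1 - s) * g) ≤ 4 * s * g ^ 2 := by nlinarith
  have keynn : 0 ≤ Real.pi * (1 - (1 - s) * g) := by
    apply mul_nonneg hπ.le; linarith
  have key2 : (Real.pi * (1 - (1 - s) * g)) ^ 2 ≤ (4 * s * g ^ 2) ^ 2 :=
    pow_le_pow_left₀ keynn key 2
  -- the quadratic in v = t² is nonnegative
  set K : ℝ := s * g ^ 2 * Real.pi ^ 2 + 4 * s ^ 2 * g ^ 4 with hK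
  have hA : 0 < K + g * Real.pi ^ 2 := by positivity
  set X : ℝ := t ^ 2 * Real.pi ^ 2 + (1 - t ^ 2) ^ 2 * K
      - (1 - t ^ 2) * (s + t ^ 2) * g * Real.pi ^ 2 with hX
  have hident : 4 * (K + g * Real.pi ^ 2) * X
      = (2 * (K + g * Real.pi ^ 2) * t ^ 2 + Real.pi ^ 2 * (1 + s * g - g) - 2 * K) ^ 2
        - (Real.pi ^ 2 * (Real.pi * (1 - (1 - s) * g)) ^ 2
            - Real.pi ^ 2 * (4 * s * g ^ 2) ^ 2) := by
    rw [hX, hK]; ring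
  have hXnn : 0 ≤ X := by
    have hd : Real.pi ^ 2 * (Real.pi * (1 - (1 - s) * g)) ^ 2
        ≤ Real.pi ^ 2 * (4 * s * g ^ 2) ^ 2 :=
      mul_le_mul_of_nonneg_left key2 (by positivity)
    nlinarith [sq_nonneg (2 * (K + g * Real.pi ^ 2) * t ^ 2
      + Real.pi ^ 2 * (1 + s * g - g) - 2 * K)]
  -- rewrite the goal
  have hts : (0:ℝ) < t ^ 2 := by positivity
  have h1s : (1:ℝ) - s ≠ 0 := by linarith
  have hrw : 8 / Real.pi ^ 2
      - ((1 - t ^ 2) ^ 2 / (2 * t ^ 2) * (1 - (1 + 8 / Real.pi ^ 2 * s * g ^ 2) ^ 2)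
      + (1 - t ^ 2) * (1 - s) * (s + t ^ 2) / t ^ 2
          * (8 * g / (Real.pi ^ 2 * (1 - s))))
      = X * 8 / (t ^ 2 * Real.pi ^ 4) := by
    rw [hX, hK]
    field_simp
    ring
  have : 0 ≤ X * 8 / (t ^ 2 * Real.pi ^ 4) := by positivity
  linarith [hrw ▸ this]
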